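/- For the automaton B_n = A(n-2, 1) with n > 3, the shortest word v extending the subset S = {q₀, s₁} is exactly v = a^{n-2} b a^{n-2}, of length 2n - 3; consequently, for every constant c < 2 and every n > 3/(2-c), the subset S is not cn-Extendable, disproving the cn-Extension conjecture for all c < 2. -/

import Mathlib

/-- State set of the automaton `A(m,k)`: `Sum.inl i` is `qᵢ` (i = 0,…,m) and
`Sum.inr j` is `s_{j+1}` (j = 0,…,k-1). -/
abbrev QA (m k : ℕ) := Fin (m + 1) ⊕ Fin k

/-- Transition function of `A(m,k)`; letter `false` is `a`, letter `true` is `b`.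
`a`: qᵢ → q_{i+1 mod m+1}, sⱼ → q₂.  `b`: q₀ → s₁, sⱼ → s_{j+1} (j < k), s_k → q₀;
all other transitions are self-loops. -/
def deltaA (m k : ℕ) : QA m k → Bool → QA m k
  | Sum.inl i, false => Sum.inl (i + 1)
  | Sum.inr _, false => Sum.inl 2
  | Sum.inl i, true =>
      if i = 0 then (if h : 0 < k then Sum.inr ⟨0, h⟩ else Sum.inl 0) else Sum.inl i
  | Sum.inr j, true =>
      if h : (j : ℕ) + 1 < k then Sum.inr ⟨(j : ℕ) + 1, h⟩ else Sum.inl 0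

/-- Action of a word on a state of `A(m,k)`. -/
def actA (m k : ℕ) (q : QA m k) (w : List Bool) : QA m k := w.foldl (deltaA m k) q

/-- Preimage `S·w⁻¹ = {q : q·w ∈ S}`. -/
def preimA (m k : ℕ) (S : Finset (QA m k)) (w : List Bool) : Finset (QA m k) :=
  Finset.univ.filter fun q => actA m k q w ∈ S

/-- `C_b = {q₀, s₁, …, s_k}`, the set of states moved by `b`. -/
def Cb (m k : ℕ) : Finset (QA m k) :=
  insert (Sum.inl 0) ((Finset.univ : Finset (Fin k)).image Sum.inr)

open Fin.NatCast

namespace Ext7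

theorem subOne_val (m : ℕ) (j : Fin (m+1)) : (j - 1).val = if j.val = 0 then m else j.val - 1 := by
  rw [Fin.sub_def]
  simp only [Fin.val_one']
  have h1 : 1 % (m+1) = if m = 0 then 0 else 1 := by
    rcases Nat.eq_zero_or_pos m with h|h
    · simp [h]
    · rw [Nat.mod_eq_of_lt (by omega)]; rw [if_neg (by omega)]
  have hj := j.isLt
  rcases Nat.eq_zero_or_pos m with h|h
  · subst h; interval_cases hv : j.val <;> simp [h1]
  · rw [h1, if_neg (by omega)]
    rcases Nat.eq_zero_or_pos j.val with h0|h0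
    · rw [h0, if_pos rfl]
      have : m + 1 - 1 + 0 = m := by omega
      rw [this, Nat.mod_eq_of_lt (by omega)]
    · rw [if_neg (by omega)]
      have : m + 1 - 1 + j.val = (j.val - 1) + (m+1) := by omega
      rw [this, Nat.add_mod_right, Nat.mod_eq_of_lt (by omega)]

variable {m : ℕ}

/-- one-letter preimage -/
def pre (x : Bool) (U : Finset (QA m 1)) : Finset (QA m 1) :=
  Finset.univ.filter fun q => deltaA m 1 q x ∈ U

/-- the set of `q`-indices of `U` -/
def PF (U : Finset (QA m 1)) : Finset (Fin (m+1)) :=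
  Finset.univ.filter fun i => Sum.inl i ∈ U

/-- distance from `i` down to `2` (mod `m+1`) -/
def dd (m : ℕ) (j : Fin (m+1)) : ℕ := if 2 ≤ j.val then j.val - 2 else j.val + m - 1

lemma mem_PF {U : Finset (QA m 1)} {i : Fin (m+1)} : i ∈ PF U ↔ Sum.inl i ∈ U := by
  simp [PF]

lemma mem_pre_inl_a {U : Finset (QA m 1)} {i : Fin (m+1)} :
    Sum.inl i ∈ pre false U ↔ Sum.inl (i+1) ∈ U := by
  simp [pre, deltaA]

lemma mem_pre_inr_a {U : Finset (QA m 1)} :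
    Sum.inr 0 ∈ pre false U ↔ Sum.inl 2 ∈ U := by
  simp [pre, deltaA]

lemma mem_pre_inl_b {U : Finset (QA m 1)} {i : Fin (m+1)} :
    Sum.inl i ∈ pre true U ↔ (if i = 0 then Sum.inr 0 ∈ U else Sum.inl i ∈ U) := by
  by_cases h : i = 0 <;> simp [pre, deltaA, h]

lemma mem_pre_inr_b {U : Finset (QA m 1)} :
    Sum.inr 0 ∈ pre true U ↔ Sum.inl 0 ∈ U := by
  simp [pre, deltaA]

end Ext7
namespace Ext7
variable {m : ℕ}

lemma PF_pre_a (U : Finset (QA m 1)) : PF (pre false U) = (PF U).image (· - 1) := by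
  ext i
  simp only [mem_PF, mem_pre_inl_a, Finset.mem_image]
  constructor
  · intro h; exact ⟨i + 1, h, by simp⟩
  · rintro ⟨j, hj, rfl⟩
    have : j - 1 + 1 = j := sub_add_cancel j 1
    rw [this]; exact hj

lemma s_pre_a (U : Finset (QA m 1)) :
    (Sum.inr 0 ∈ pre false U) ↔ (2 : Fin (m+1)) ∈ PF U := by
  rw [mem_pre_inr_a, mem_PF]

lemma PF_pre_b (U : Finset (QA m 1)) :
    PF (pre true U) = if Sum.inr 0 ∈ U then insert 0 ((PF U).erase 0) else (PF U).erase 0 := by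
  ext i
  by_cases h0 : i = 0 <;> by_cases hs : Sum.inr 0 ∈ U <;>
    simp [mem_PF, mem_pre_inl_b, h0, hs, Finset.mem_erase, Finset.mem_insert, mem_PF]

lemma s_pre_b (U : Finset (QA m 1)) :
    (Sum.inr 0 ∈ pre true U) ↔ (0 : Fin (m+1)) ∈ PF U := by
  rw [mem_pre_inr_b, mem_PF]

lemma eq_of_PF_s {U W : Finset (QA m 1)} (hP : PF U = PF W)
    (hs : (Sum.inr 0 ∈ U) ↔ (Sum.inr 0 ∈ W)) : U = W := by
  ext q
  rcases q with i | j
  · rw [← mem_PF, ← mem_PF, hP]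
  · have : j = 0 := Subsingleton.elim _ _
    subst this; exact hs

lemma card_eq (U : Finset (QA m 1)) :
    U.card = (PF U).card + (if Sum.inr 0 ∈ U then 1 else 0) := by
  classical
  have h1 : U = (PF U).image Sum.inl ∪ (if Sum.inr 0 ∈ U then {Sum.inr 0} else ∅) := by
    apply eq_of_PF_s
    · ext i
      by_cases hs : Sum.inr 0 ∈ U <;>
        simp [mem_PF, Finset.mem_union, Finset.mem_image, hs]
    · by_cases hs : Sum.inr 0 ∈ U <;> simp [mem_PF, hs]
  have hdisj : Disjoint ((PF U).image Sum.inl)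
      (if Sum.inr 0 ∈ U then ({Sum.inr 0} : Finset (QA m 1)) else ∅) := by
    by_cases hs : Sum.inr 0 ∈ U <;> simp [hs, Finset.disjoint_left]
  conv_lhs => rw [h1]
  rw [Finset.card_union_of_disjoint hdisj, Finset.card_image_of_injective _ Sum.inl_injective]
  congr 1
  split <;> simp

end Ext7

namespace Ext7
variable {m : ℕ}

lemma val_two (hm : 2 ≤ m) : ((2 : Fin (m+1)) : ℕ) = 2 := by
  have : ((2 : Fin (m+1)) : ℕ) = 2 % (m+1) := rfl
  rw [this, Nat.mod_eq_of_lt (by omega)]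

lemma val_one (hm : 2 ≤ m) : ((1 : Fin (m+1)) : ℕ) = 1 := by
  have : ((1 : Fin (m+1)) : ℕ) = 1 % (m+1) := rfl
  rw [this, Nat.mod_eq_of_lt (by omega)]

lemma dd_le (hm : 1 ≤ m) (j : Fin (m+1)) : dd m j ≤ m := by
  have := j.isLt; unfold dd; split_ifs <;> omega

lemma dd_subOne (hm : 2 ≤ m) {j : Fin (m+1)} (hj : (j:ℕ) ≠ 2) :
    dd m (j - 1) + 1 = dd m j := by
  have := j.isLt
  simp only [dd, subOne_val]
  split_ifs <;> omega

lemma dd_zero (hm : 2 ≤ m) : dd m 0 = m - 1 := by simp [dd]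

lemma dd_one (hm : 2 ≤ m) : dd m 1 = m := by
  unfold dd; rw [val_one hm, if_neg (by omega)]; omega

lemma dd_two (hm : 2 ≤ m) : dd m 2 = 0 := by
  unfold dd; rw [val_two hm, if_pos (by omega)]

/-- lower bound on the number of letters needed to reach a set of size `≥ 3` -/
def L (m : ℕ) (U : Finset (QA m 1)) : ℕ :=
  if 3 ≤ U.card then 0
  else if hP : (PF U).Nonempty then
    if 2 ≤ (PF U).card then 1 + (PF U).inf' hP (dd m)
    else if Sum.inr 0 ∈ U then
      if (0 : Fin (m+1)) ∈ PF U then 2*m+1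
      else 2 + (PF U).inf' hP (fun j => min (m-1) (dd m j))
    else m + 2 + (PF U).inf' hP (dd m)
  else 2*m + 2

lemma L_card3 {U : Finset (QA m 1)} (h : 3 ≤ U.card) : L m U = 0 := by
  rw [L, if_pos h]

lemma L_empty {U : Finset (QA m 1)} (hP : PF U = ∅) : L m U = 2*m+2 := by
  have hc : U.card ≤ 1 := by rw [card_eq U, hP]; split <;> simp
  rw [L, if_neg (by omega), dif_neg (by rw [hP]; simp)]

lemma L_sing {U : Finset (QA m 1)} {j : Fin (m+1)} (hP : PF U = {j})
    (hs : Sum.inr 0 ∉ U) : L m U = m + 2 + dd m j := by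
  have hc : U.card = 1 := by rw [card_eq U, hP]; simp [hs]
  have hne : (PF U).Nonempty := by rw [hP]; simp
  rw [L, if_neg (by omega), dif_pos hne, if_neg (by rw [hP]; simp), if_neg hs]
  congr 1
  simp [hP]

lemma L_S {U : Finset (QA m 1)} (hP : PF U = {0})
    (hs : Sum.inr 0 ∈ U) : L m U = 2*m+1 := by
  have hc : U.card = 2 := by rw [card_eq U, hP]; simp [hs]
  have hne : (PF U).Nonempty := by rw [hP]; simp
  rw [L, if_neg (by omega), dif_pos hne, if_neg (by rw [hP]; simp), if_pos hs,
    if_pos (by rw [hP]; simp)]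

lemma L_sing_s {U : Finset (QA m 1)} {j : Fin (m+1)} (hP : PF U = {j}) (hj : j ≠ 0)
    (hs : Sum.inr 0 ∈ U) : L m U = 2 + min (m-1) (dd m j) := by
  have hc : U.card = 2 := by rw [card_eq U, hP]; simp [hs]
  have hne : (PF U).Nonempty := by rw [hP]; simp
  rw [L, if_neg (by omega), dif_pos hne, if_neg (by rw [hP]; simp), if_pos hs,
    if_neg (by rw [hP]; simp [hj.symm, hj])]
  congr 1
  simp [hP]

lemma L_pair {U : Finset (QA m 1)} {i j : Fin (m+1)} (hij : i ≠ j) (hP : PF U = {i, j})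
    (hs : Sum.inr 0 ∉ U) : L m U = 1 + min (dd m i) (dd m j) := by
  have hcP : (PF U).card = 2 := by
    rw [hP, Finset.card_insert_of_notMem (by simp [hij])]; simp
  have hc : U.card = 2 := by rw [card_eq U, hcP]; simp [hs]
  have hne : (PF U).Nonempty := by rw [hP]; simp
  rw [L, if_neg (by omega), dif_pos hne, if_pos (by omega)]
  congr 1
  rw [Finset.inf'_congr hne hP (fun _ _ => rfl)]
  simp [Finset.inf'_insert]

end Ext7

namespace Ext7
variable {m : ℕ}

lemma fin_sub_inj {i j : Fin (m+1)} (h : i - 1 = j - 1) : i = j := by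
  have : i - 1 + 1 = j - 1 + 1 := by rw [h]
  simpa [sub_add_cancel] using this

lemma two_ne_zero' (hm : 2 ≤ m) : (2 : Fin (m+1)) ≠ 0 := by
  apply Fin.ne_of_val_ne; rw [val_two hm]; simp

lemma one_ne_zero' (hm : 2 ≤ m) : (1 : Fin (m+1)) ≠ 0 := by
  apply Fin.ne_of_val_ne; rw [val_one hm]; simp

lemma val_ne_two_iff (hm : 2 ≤ m) {j : Fin (m+1)} : (j:ℕ) ≠ 2 ↔ j ≠ 2 := by
  simp only [Ne, Fin.ext_iff, val_two hm]

lemma lemA (hm : 2 ≤ m) (U : Finset (QA m 1)) (x : Bool) :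
    L m U ≤ L m (pre x U) + 1 := by
  classical
  by_cases h3 : 3 ≤ U.card
  · rw [L_card3 h3]; omega
  have hcard : (PF U).card + (if Sum.inr 0 ∈ U then 1 else 0) ≤ 2 := by
    rw [← card_eq]; omega
  have hple : (PF U).card ≤ 2 := by split at hcard <;> omega
  interval_cases hp : (PF U).card
  · -- p = 0
    have hP : PF U = ∅ := Finset.card_eq_zero.1 hp
    rw [L_empty hP]
    cases x
    · have hP' : PF (pre false U) = ∅ := by rw [PF_pre_a, hP]; simp
      rw [L_empty hP']; omega
    · by_cases hs : Sum.inr 0 ∈ U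
      · have hP' : PF (pre true U) = {0} := by
          rw [PF_pre_b, if_pos hs, hP]; simp
        have hs' : Sum.inr 0 ∉ pre true U := by
          rw [s_pre_b, hP]; simp
        rw [L_sing hP' hs', dd_zero hm]; omega
      · have hP' : PF (pre true U) = ∅ := by
          rw [PF_pre_b, if_neg hs, hP]; simp
        rw [L_empty hP']; omega
  · -- p = 1
    obtain ⟨j, hP⟩ := Finset.card_eq_one.1 hp
    have hjlt := j.isLt
    cases x
    · -- letter a
      have hP' : PF (pre false U) = {j - 1} := by rw [PF_pre_a, hP]; simp
      by_cases hj2 : j = 2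
      · -- j = 2
        subst hj2
        have h21 : (2 : Fin (m+1)) - 1 = 1 := sub_eq_of_eq_add one_add_one_eq_two.symm
        rw [h21] at hP'
        have hs' : Sum.inr 0 ∈ pre false U := by rw [s_pre_a, hP]; simp
        rw [L_sing_s hP' (one_ne_zero' hm) hs', dd_one hm]
        by_cases hs : Sum.inr 0 ∈ U
        · rw [L_sing_s hP (two_ne_zero' hm) hs, dd_two hm]; omega
        · rw [L_sing hP hs, dd_two hm]; omega
      · -- j ≠ 2
        have hs' : Sum.inr 0 ∉ pre false U := by rw [s_pre_a, hP]; simp [Ne.symm hj2]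
        rw [L_sing hP' hs']
        have hdd := dd_subOne hm ((val_ne_two_iff hm).2 hj2)
        by_cases hs : Sum.inr 0 ∈ U
        · by_cases hj0 : j = 0
          · subst hj0
            rw [L_S hP hs]
            rw [dd_zero hm] at hdd
            omega
          · rw [L_sing_s hP hj0 hs]; omega
        · rw [L_sing hP hs]; omega
    · -- letter b
      by_cases hs : Sum.inr 0 ∈ U
      · by_cases hj0 : j = 0
        · subst hj0
          have hP' : PF (pre true U) = {0} := by
            rw [PF_pre_b, if_pos hs, hP]; simp
          have hs' : Sum.inr 0 ∈ pre true U := by rw [s_pre_b, hP]; simp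
          rw [L_S hP hs, L_S hP' hs']; omega
        · have hP' : PF (pre true U) = {0, j} := by
            rw [PF_pre_b, if_pos hs, hP, Finset.erase_eq_of_notMem (by simp [eq_comm, hj0])]
          have hs' : Sum.inr 0 ∉ pre true U := by rw [s_pre_b, hP]; simp [eq_comm, hj0]
          rw [L_sing_s hP hj0 hs, L_pair (Ne.symm hj0) hP' hs', dd_zero hm]
          omega
      · by_cases hj0 : j = 0
        · subst hj0
          have hP' : PF (pre true U) = ∅ := by
            rw [PF_pre_b, if_neg hs, hP, Finset.erase_singleton]
          rw [L_sing hP hs, L_empty hP', dd_zero hm]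
          omega
        · have hP' : PF (pre true U) = {j} := by
            rw [PF_pre_b, if_neg hs, hP, Finset.erase_eq_of_notMem (by simp [eq_comm, hj0])]
          have hs' : Sum.inr 0 ∉ pre true U := by rw [s_pre_b, hP]; simp [eq_comm, hj0]
          rw [L_sing hP hs, L_sing hP' hs']
          omega
  · -- p = 2
    obtain ⟨i, j, hij, hP⟩ := Finset.card_eq_two.1 hp
    have hs : Sum.inr 0 ∉ U := by
      intro hs; rw [if_pos hs] at hcard; omega
    rw [L_pair hij hP hs]
    cases x
    · -- letter a
      have hP' : PF (pre false U) = {i - 1, j - 1} := by rw [PF_pre_a, hP]; simp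
      by_cases h2 : (2 : Fin (m+1)) ∈ PF U
      · -- gain: preimage has card 3
        have hs' : Sum.inr 0 ∈ pre false U := (s_pre_a U).2 h2
        have hij' : i - 1 ≠ j - 1 := fun h => hij (fin_sub_inj h)
        have hcP' : (PF (pre false U)).card = 2 := by
          rw [hP', Finset.card_insert_of_notMem (by simp [hij'])]; simp
        have h3' : 3 ≤ (pre false U).card := by
          rw [card_eq, hcP', if_pos hs']
        rw [L_card3 h3']
        have hmin : min (dd m i) (dd m j) = 0 := by
          rw [hP] at h2; simp only [Finset.mem_insert, Finset.mem_singleton] at h2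
          rcases h2 with h | h <;> rw [← h, dd_two hm] <;> simp
        omega
      · rw [hP] at h2; simp only [Finset.mem_insert, Finset.mem_singleton] at h2
        push_neg at h2
        obtain ⟨hi2, hj2⟩ := h2
        have hs' : Sum.inr 0 ∉ pre false U := by
          rw [s_pre_a, hP]; simp [hi2, hj2]
        have hij' : i - 1 ≠ j - 1 := fun h => hij (fin_sub_inj h)
        rw [L_pair hij' hP' hs']
        have hd1 := dd_subOne hm ((val_ne_two_iff hm).2 (Ne.symm hi2))
        have hd2 := dd_subOne hm ((val_ne_two_iff hm).2 (Ne.symm hj2))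
        omega
    · -- letter b
      by_cases h0 : (0 : Fin (m+1)) ∈ PF U
      · -- 0 is one of i, j
        have hs' : Sum.inr 0 ∈ pre true U := (s_pre_b U).2 h0
        rw [hP] at h0; simp only [Finset.mem_insert, Finset.mem_singleton] at h0
        rcases h0 with h | h
        · -- i = 0
          subst h
          have hP' : PF (pre true U) = {j} := by
            rw [PF_pre_b, if_neg hs, hP, Finset.erase_insert (by simpa using hij)]
          rw [L_sing_s hP' (Ne.symm hij) hs', dd_zero hm]
          omega
        · -- j = 0
          subst h
          have hP' : PF (pre true U) = {i} := by
            rw [PF_pre_b, if_neg hs, hP, Finset.pair_comm,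
              Finset.erase_insert (by simpa using Ne.symm hij)]
          rw [L_sing_s hP' hij hs', dd_zero hm]
          omega
      · have hs' : Sum.inr 0 ∉ pre true U := fun h => h0 ((s_pre_b U).1 h)
        have hP' : PF (pre true U) = {i, j} := by
          rw [PF_pre_b, if_neg hs, hP, Finset.erase_eq_of_notMem (by rw [← hP]; exact h0)]
        rw [L_pair hij hP' hs']
        omega

end Ext7

namespace Ext7
variable {m : ℕ}

lemma preim_nil (U : Finset (QA m 1)) : preimA m 1 U [] = U := by
  ext q; rw [preimA, Finset.mem_filter]; simp [actA]

lemma preim_single (U : Finset (QA m 1)) (x : Bool) : preimA m 1 U [x] = pre x U := by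
  ext q; rw [preimA, pre, Finset.mem_filter, Finset.mem_filter]; simp [actA]

lemma preim_append (U : Finset (QA m 1)) (w : List Bool) (x : Bool) :
    preimA m 1 U (w ++ [x]) = preimA m 1 (pre x U) w := by
  ext q; rw [preimA, preimA, Finset.mem_filter, Finset.mem_filter]; simp [pre, actA, List.foldl_append]

lemma lemLB (hm : 2 ≤ m) (v : List Bool) :
    ∀ U : Finset (QA m 1), 3 ≤ (preimA m 1 U v).card → L m U ≤ v.length := by
  induction v using List.reverseRecOn with
  | nil =>
    intro U h
    rw [preim_nil] at h
    rw [L_card3 h]; omega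
  | append_singleton w x ih =>
    intro U h
    rw [preim_append] at h
    have h1 := ih (pre x U) h
    have h2 := lemA hm U x
    simp only [List.length_append, List.length_singleton]
    omega

def VC (m : ℕ) (r : ℕ) : Finset (QA m 1) :=
  if r = 0 then {Sum.inl 0, Sum.inr 0}
  else if r < m then {Sum.inl ((m - r + 1 : ℕ) : Fin (m+1))}
  else if r = m then {Sum.inl 1, Sum.inr 0}
  else {Sum.inl ((2*m+3-r : ℕ) : Fin (m+1)), Sum.inl ((2*m+2-r : ℕ) : Fin (m+1))}

lemma PF_sing_inl (c : Fin (m+1)) : PF ({Sum.inl c} : Finset (QA m 1)) = {c} := by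
  ext i; simp [mem_PF]

lemma PF_inl_inr (c : Fin (m+1)) : PF ({Sum.inl c, Sum.inr 0} : Finset (QA m 1)) = {c} := by
  ext i; simp [mem_PF]

lemma PF_pair_inl (c d : Fin (m+1)) :
    PF ({Sum.inl c, Sum.inl d} : Finset (QA m 1)) = {c, d} := by
  ext i; simp [mem_PF]

lemma mod_tame (k : ℕ) (h : k < 2*(m+1)) : k % (m+1) = if k < m+1 then k else k - (m+1) := by
  split
  · exact Nat.mod_eq_of_lt (by omega)
  · rw [Nat.mod_eq_sub_mod (by omega), Nat.mod_eq_of_lt (by omega)]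

lemma dd_val (j : Fin (m+1)) : dd m j = if 2 ≤ (j:ℕ) then (j:ℕ) - 2 else (j:ℕ) + m - 1 := rfl

lemma lemL1 (hm : 2 ≤ m) {r : ℕ} (hr : r ≤ 2*m) : L m (VC m r) = 2*m+1-r := by
  rcases Nat.eq_zero_or_pos r with h0 | h0
  · subst h0
    rw [VC, if_pos rfl, L_S (by rw [PF_inl_inr]) (by simp)]
    omega
  rcases Nat.lt_or_ge r m with h1 | h1
  · -- 0 < r < m : singleton
    rw [VC, if_neg (by omega), if_pos h1]
    have hv : (((m - r + 1 : ℕ) : Fin (m+1)) : ℕ) = m - r + 1 :=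
      Fin.val_cast_of_lt (by omega)
    rw [L_sing (PF_sing_inl _) (by simp), dd_val, hv]
    split_ifs <;> omega
  rcases Nat.eq_or_lt_of_le h1 with h2 | h2
  · -- r = m
    rw [VC, if_neg (by omega), if_neg (by omega), if_pos h2.symm,
      L_sing_s (PF_inl_inr _) (one_ne_zero' hm) (by simp), dd_one hm]
    omega
  · -- m < r ≤ 2m
    rw [VC, if_neg (by omega), if_neg (by omega), if_neg (by omega)]
    have hv1 : (((2*m+3-r : ℕ) : Fin (m+1)) : ℕ) = (2*m+3-r) % (m+1) := by simp
    have hv2 : (((2*m+2-r : ℕ) : Fin (m+1)) : ℕ) = (2*m+2-r) % (m+1) := by simp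
    rw [mod_tame _ (by omega)] at hv1
    rw [mod_tame _ (by omega)] at hv2
    have hne : ((2*m+3-r : ℕ) : Fin (m+1)) ≠ ((2*m+2-r : ℕ) : Fin (m+1)) := by
      apply Fin.ne_of_val_ne
      rw [hv1, hv2]; split_ifs <;> omega
    rw [L_pair hne (PF_pair_inl _ _) (by simp), dd_val, dd_val, hv1, hv2]
    split_ifs <;> omega

lemma lemC (hm : 2 ≤ m) {r : ℕ} (hr : r < 2*m) :
    pre (decide (r = m)) (VC m r) = VC m (r+1) := by
  rcases Nat.eq_zero_or_pos r with h0 | h0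
  · -- A : r = 0
    subst h0
    rw [decide_eq_false (by omega : ¬ (0 = m))]
    have hmm : ((( m : ℕ)) : Fin (m+1)) = (0 : Fin (m+1)) - 1 := by
      apply Fin.ext
      rw [subOne_val, Fin.val_natCast]
      simp [Nat.mod_eq_of_lt (by omega : m < m + 1)]
    rw [VC, if_pos rfl, VC, if_neg (by omega), if_pos (by omega)]
    have h1 : m - 1 + 1 = m := by omega
    rw [h1, hmm]
    apply eq_of_PF_s
    · rw [PF_pre_a, PF_inl_inr, PF_sing_inl, Finset.image_singleton]
    · rw [s_pre_a, PF_inl_inr]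
      simp [two_ne_zero' hm]
  rcases Nat.lt_or_ge (r+1) m with h1 | h1
  · -- B : 0 < r, r + 1 < m
    rw [decide_eq_false (by omega : ¬ (r = m))]
    rw [VC, if_neg (by omega), if_pos (by omega), VC, if_neg (by omega), if_pos h1]
    have hv : (((m - r + 1 : ℕ) : Fin (m+1)) : ℕ) = m - r + 1 := Fin.val_cast_of_lt (by omega)
    have hv' : (((m - (r+1) + 1 : ℕ) : Fin (m+1)) : ℕ) = m - r := by
      rw [Fin.val_cast_of_lt (by omega)]; omega
    have hsub : ((m - r + 1 : ℕ) : Fin (m+1)) - 1 = ((m - (r+1) + 1 : ℕ) : Fin (m+1)) := by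
      apply Fin.ext
      rw [subOne_val, hv, hv', if_neg (by omega)]
      omega
    apply eq_of_PF_s
    · rw [PF_pre_a, PF_sing_inl, PF_sing_inl, Finset.image_singleton, hsub]
    · rw [s_pre_a, PF_sing_inl]
      have hne : ((m - r + 1 : ℕ) : Fin (m+1)) ≠ 2 := by
        apply Fin.ne_of_val_ne; rw [hv, val_two hm]; omega
      apply iff_of_false
      · simp only [Finset.mem_singleton]; exact Ne.symm hne
      · simp
  rcases Nat.eq_or_lt_of_le h1 with h2 | h2
  · -- C : r = m - 1
    rw [decide_eq_false (by omega : ¬ (r = m))]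
    rw [VC, if_neg (by omega), if_pos (by omega), VC, if_neg (by omega),
      if_neg (by omega), if_pos h2.symm]
    have hc2 : ((m - r + 1 : ℕ) : Fin (m+1)) = 2 := by
      apply Fin.ext
      rw [Fin.val_cast_of_lt (by omega), val_two hm]; omega
    rw [hc2]
    apply eq_of_PF_s
    · rw [PF_pre_a, PF_sing_inl, PF_inl_inr, Finset.image_singleton]
      have : (2 : Fin (m+1)) - 1 = 1 := sub_eq_of_eq_add (one_add_one_eq_two (R := Fin (m+1))).symm
      rw [this]
    · rw [s_pre_a, PF_sing_inl]
      simp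
  rcases Nat.eq_or_lt_of_le h2 with h3 | h3
  · -- D : r = m
    have hrm : r = m := by omega
    rw [decide_eq_true (by omega : r = m)]
    rw [VC, if_neg (by omega), if_neg (by omega), if_pos hrm, VC, if_neg (by omega),
      if_neg (by omega), if_neg (by omega)]
    have hv1 : ((2*m+3-(r+1) : ℕ) : Fin (m+1)) = (1 : Fin (m+1)) := by
      apply Fin.ext
      rw [Fin.val_natCast, mod_tame _ (by omega), val_one hm]
      split_ifs <;> omega
    have hv2 : ((2*m+2-(r+1) : ℕ) : Fin (m+1)) = (0 : Fin (m+1)) := by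
      apply Fin.ext
      rw [Fin.val_natCast, mod_tame _ (by omega), Fin.val_zero]
      split_ifs <;> omega
    rw [hv1, hv2]
    apply eq_of_PF_s
    · rw [PF_pre_b, if_pos (by simp), PF_inl_inr, PF_pair_inl,
        Finset.erase_eq_of_notMem (by simpa using Ne.symm (one_ne_zero' hm))]
      exact Finset.pair_comm 0 1
    · rw [s_pre_b, PF_inl_inr]
      apply iff_of_false
      · simp only [Finset.mem_singleton]; exact Ne.symm (one_ne_zero' hm)
      · simp
  · -- E : m < r < 2m
    rw [decide_eq_false (by omega : ¬ (r = m))]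
    rw [VC, if_neg (by omega), if_neg (by omega), if_neg (by omega),
      VC, if_neg (by omega), if_neg (by omega), if_neg (by omega)]
    have hv1 : (((2*m+3-r : ℕ) : Fin (m+1)) : ℕ) = (2*m+3-r) % (m+1) := by simp
    have hv2 : (((2*m+2-r : ℕ) : Fin (m+1)) : ℕ) = (2*m+2-r) % (m+1) := by simp
    have hv1' : (((2*m+3-(r+1) : ℕ) : Fin (m+1)) : ℕ) = (2*m+2-r) % (m+1) := by
      have : 2*m+3-(r+1) = 2*m+2-r := by omega
      rw [this]; simp
    have hv2' : (((2*m+2-(r+1) : ℕ) : Fin (m+1)) : ℕ) = (2*m+1-r) % (m+1) := by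
      have : 2*m+2-(r+1) = 2*m+1-r := by omega
      rw [this]; simp
    rw [mod_tame _ (by omega)] at hv1 hv1'
    rw [mod_tame _ (by omega)] at hv2 hv2'
    have hsub1 : ((2*m+3-r : ℕ) : Fin (m+1)) - 1 = ((2*m+3-(r+1) : ℕ) : Fin (m+1)) := by
      apply Fin.ext
      rw [subOne_val, hv1, hv1']
      split_ifs <;> omega
    have hsub2 : ((2*m+2-r : ℕ) : Fin (m+1)) - 1 = ((2*m+2-(r+1) : ℕ) : Fin (m+1)) := by
      apply Fin.ext
      rw [subOne_val, hv2, hv2']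
      split_ifs <;> omega
    apply eq_of_PF_s
    · rw [PF_pre_a, PF_pair_inl, PF_pair_inl, Finset.image_insert, Finset.image_singleton,
        hsub1, hsub2]
    · rw [s_pre_a, PF_pair_inl]
      have hne1 : ((2*m+3-r : ℕ) : Fin (m+1)) ≠ 2 := by
        apply Fin.ne_of_val_ne; rw [hv1, val_two hm]; split_ifs <;> omega
      have hne2 : ((2*m+2-r : ℕ) : Fin (m+1)) ≠ 2 := by
        apply Fin.ne_of_val_ne; rw [hv2, val_two hm]; split_ifs <;> omega
      apply iff_of_false
      · simp only [Finset.mem_insert, Finset.mem_singleton]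
        rintro (h | h)
        · exact hne1 h.symm
        · exact hne2 h.symm
      · simp

end Ext7

namespace Ext7
variable {m : ℕ}

lemma cast_two_eq (hm : 2 ≤ m) : ((2 : ℕ) : Fin (m+1)) = (2 : Fin (m+1)) := by
  apply Fin.ext
  rw [Fin.val_natCast, Nat.mod_eq_of_lt (by omega), val_two hm]

lemma lemForce (hm : 2 ≤ m) {r : ℕ} (hr : r ≤ 2*m) {x : Bool}
    (hL : L m (pre x (VC m r)) = 2*m - r) : x = decide (r = m) := by
  by_contra hx
  by_cases hrm : r = m
  · -- good letter is true, so x = false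
    have hxf : x = false := by cases x <;> simp [hrm] at hx ⊢
    subst hxf
    have hVC : VC m r = {Sum.inl 1, Sum.inr 0} := by
      rw [VC, if_neg (by omega), if_neg (by omega), if_pos hrm]
    have hsub : (1 : Fin (m+1)) - 1 = 0 := sub_self 1
    have hP' : PF (pre false (VC m r)) = {0} := by
      rw [hVC, PF_pre_a, PF_inl_inr, Finset.image_singleton, hsub]
    have hs' : Sum.inr 0 ∉ pre false (VC m r) := by
      rw [s_pre_a, hVC, PF_inl_inr]
      simp only [Finset.mem_singleton]
      intro h
      have := congrArg Fin.val h
      rw [val_two hm, val_one hm] at this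
      omega
    rw [L_sing hP' hs', dd_zero hm] at hL
    omega
  · have hxt : x = true := by cases x <;> simp [hrm] at hx ⊢
    subst hxt
    rcases Nat.eq_zero_or_pos r with h0 | h0
    · -- r = 0
      subst h0
      have hVC : VC m 0 = {Sum.inl 0, Sum.inr 0} := by rw [VC, if_pos rfl]
      have hP' : PF (pre true (VC m 0)) = {0} := by
        rw [hVC, PF_pre_b, if_pos (by simp), PF_inl_inr, Finset.erase_singleton]
        simp
      have hs' : Sum.inr 0 ∈ pre true (VC m 0) := by
        rw [s_pre_b, hVC, PF_inl_inr]; simp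
      rw [L_S hP' hs'] at hL
      omega
    rcases Nat.lt_or_ge r m with h1 | h1
    · -- 0 < r < m : singleton, b fixes it
      have hVC : VC m r = {Sum.inl ((m - r + 1 : ℕ) : Fin (m+1))} := by
        rw [VC, if_neg (by omega), if_pos h1]
      have hv : (((m - r + 1 : ℕ) : Fin (m+1)) : ℕ) = m - r + 1 := Fin.val_cast_of_lt (by omega)
      have hc0 : ((m - r + 1 : ℕ) : Fin (m+1)) ≠ 0 := by
        apply Fin.ne_of_val_ne; rw [hv]; simp
      have heq : pre true (VC m r) = VC m r := by
        apply eq_of_PF_s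
        · rw [hVC, PF_pre_b, if_neg (by simp), PF_sing_inl,
            Finset.erase_eq_of_notMem (by simpa using Ne.symm hc0)]
        · rw [s_pre_b, hVC, PF_sing_inl]
          apply iff_of_false
          · simp only [Finset.mem_singleton]; exact Ne.symm hc0
          · simp
      rw [heq, lemL1 hm (by omega)] at hL
      omega
    · -- m < r ≤ 2m  (r ≠ m)
      have h2 : m < r := by omega
      have hVC : VC m r = {Sum.inl ((2*m+3-r : ℕ) : Fin (m+1)),
          Sum.inl ((2*m+2-r : ℕ) : Fin (m+1))} := by
        rw [VC, if_neg (by omega), if_neg (by omega), if_neg (by omega)]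
      have hv1 : (((2*m+3-r : ℕ) : Fin (m+1)) : ℕ) =
          (if 2*m+3-r < m+1 then 2*m+3-r else 2*m+3-r - (m+1)) := by
        rw [Fin.val_natCast, mod_tame _ (by omega)]
      have hv2 : (((2*m+2-r : ℕ) : Fin (m+1)) : ℕ) =
          (if 2*m+2-r < m+1 then 2*m+2-r else 2*m+2-r - (m+1)) := by
        rw [Fin.val_natCast, mod_tame _ (by omega)]
      by_cases hr1 : r = m+1
      · -- pair {1, 0}
        subst hr1
        have hc : ((2*m+3-(m+1) : ℕ) : Fin (m+1)) = (1 : Fin (m+1)) := by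
          apply Fin.ext; rw [Fin.val_natCast, mod_tame _ (by omega), val_one hm]
          split_ifs <;> omega
        have hd : ((2*m+2-(m+1) : ℕ) : Fin (m+1)) = (0 : Fin (m+1)) := by
          apply Fin.ext; rw [Fin.val_natCast, mod_tame _ (by omega), Fin.val_zero]
          split_ifs <;> omega
        rw [hc, hd] at hVC
        have hP' : PF (pre true (VC m (m+1))) = {1} := by
          rw [hVC, PF_pre_b, if_neg (by simp), PF_pair_inl, Finset.pair_comm,
            Finset.erase_insert (by simpa using Ne.symm (one_ne_zero' hm))]
        have hs' : Sum.inr 0 ∈ pre true (VC m (m+1)) := by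
          rw [s_pre_b, hVC, PF_pair_inl]; simp
        rw [L_sing_s hP' (one_ne_zero' hm) hs', dd_one hm] at hL
        omega
      by_cases hr2 : r = m+2
      · -- pair {0, m}
        subst hr2
        have hc : ((2*m+3-(m+2) : ℕ) : Fin (m+1)) = (0 : Fin (m+1)) := by
          apply Fin.ext; rw [Fin.val_natCast, mod_tame _ (by omega), Fin.val_zero]
          split_ifs <;> omega
        have hdv : (((2*m+2-(m+2) : ℕ) : Fin (m+1)) : ℕ) = m := by
          rw [Fin.val_natCast, mod_tame _ (by omega)]
          split_ifs <;> omega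
        have hd0 : ((2*m+2-(m+2) : ℕ) : Fin (m+1)) ≠ 0 := by
          apply Fin.ne_of_val_ne; rw [hdv]; simp; omega
        rw [hc] at hVC
        have hP' : PF (pre true (VC m (m+2))) = {((2*m+2-(m+2) : ℕ) : Fin (m+1))} := by
          rw [hVC, PF_pre_b, if_neg (by simp), PF_pair_inl,
            Finset.erase_insert (by simpa using Ne.symm hd0)]
        have hs' : Sum.inr 0 ∈ pre true (VC m (m+2)) := by
          rw [s_pre_b, hVC, PF_pair_inl]; simp
        rw [L_sing_s hP' hd0 hs', dd_val, hdv] at hL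
        have : 2 ≤ m := hm
        rw [if_pos (by omega)] at hL
        omega
      · -- 0 not in the pair : b fixes the set
        have hc0 : ((2*m+3-r : ℕ) : Fin (m+1)) ≠ 0 := by
          apply Fin.ne_of_val_ne; rw [hv1, Fin.val_zero]
          split_ifs <;> omega
        have hd0 : ((2*m+2-r : ℕ) : Fin (m+1)) ≠ 0 := by
          apply Fin.ne_of_val_ne; rw [hv2, Fin.val_zero]
          split_ifs <;> omega
        have heq : pre true (VC m r) = VC m r := by
          apply eq_of_PF_s
          · rw [hVC, PF_pre_b, if_neg (by simp), PF_pair_inl,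
              Finset.erase_eq_of_notMem (by
                simp only [Finset.mem_insert, Finset.mem_singleton]
                rintro (h | h)
                · exact hc0 h.symm
                · exact hd0 h.symm)]
          · rw [s_pre_b, hVC, PF_pair_inl]
            apply iff_of_false
            · simp only [Finset.mem_insert, Finset.mem_singleton]
              rintro (h | h)
              · exact hc0 h.symm
              · exact hd0 h.symm
            · simp
        rw [heq, lemL1 hm hr] at hL
        omega

lemma lemWin (hm : 2 ≤ m) : 3 ≤ (pre false (VC m (2*m))).card := by
  have hVC : VC m (2*m) = {Sum.inl ((3 : ℕ) : Fin (m+1)), Sum.inl ((2 : ℕ) : Fin (m+1))} := by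
    rw [VC, if_neg (by omega), if_neg (by omega), if_neg (by omega)]
    have e1 : 2*m+3-2*m = 3 := by omega
    have e2 : 2*m+2-2*m = 2 := by omega
    rw [e1, e2]
  have hv3 : (((3 : ℕ) : Fin (m+1)) : ℕ) = 3 % (m+1) := Fin.val_natCast 3 (m+1)
  have hcd : ((3 : ℕ) : Fin (m+1)) ≠ ((2 : ℕ) : Fin (m+1)) := by
    apply Fin.ne_of_val_ne
    rw [hv3, Fin.val_natCast, mod_tame _ (by omega), Nat.mod_eq_of_lt (by omega)]
    split_ifs <;> omega
  have hs' : Sum.inr 0 ∈ pre false (VC m (2*m)) := by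
    rw [s_pre_a, hVC, PF_pair_inl, cast_two_eq hm]
    simp
  have hij' : ((3 : ℕ) : Fin (m+1)) - 1 ≠ ((2 : ℕ) : Fin (m+1)) - 1 :=
    fun h => hcd (fin_sub_inj h)
  have hP' : PF (pre false (VC m (2*m))) =
      {((3 : ℕ) : Fin (m+1)) - 1, ((2 : ℕ) : Fin (m+1)) - 1} := by
    rw [hVC, PF_pre_a, PF_pair_inl, Finset.image_insert, Finset.image_singleton]
  have hcP : (PF (pre false (VC m (2*m)))).card = 2 := by
    rw [hP', Finset.card_insert_of_notMem (by simpa using hij')]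
    simp
  rw [card_eq, hcP, if_pos hs']

/-- the claimed unique shortest extension word -/
def v0 (m : ℕ) : List Bool := List.replicate m false ++ true :: List.replicate m false

lemma length_v0 : (v0 m).length = 2*m+1 := by
  simp [v0]; omega

lemma take_v0 {l : ℕ} (h : l ≤ 2*m+1) :
    (v0 m).take l = if l ≤ m then List.replicate l false
      else List.replicate m false ++ true :: List.replicate (l-m-1) false := by
  rw [v0, List.take_append, List.take_replicate, List.length_replicate]
  split
  · next hl =>
    have : min l m = l := by omega
    rw [this, (by omega : l - m = 0)]
    simp
  · next hl =>
    have : min l m = m := by omega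
    rw [this, (by omega : l - m = (l - m - 1) + 1)]
    rw [List.take_cons (by omega), List.take_replicate]
    have h2 : (l - m - 1 + 1 - 1) ⊓ m = l - m - 1 + 1 - 1 := by omega
    rw [h2]

lemma take_succ_v0 {l : ℕ} (h : l < 2*m+1) :
    (v0 m).take (l+1) = (v0 m).take l ++ [decide (l = m)] := by
  rcases Nat.lt_or_ge l m with h1 | h1
  · rw [take_v0 (by omega), take_v0 (by omega), if_pos (by omega), if_pos (by omega),
      decide_eq_false (by omega : ¬ (l = m)), List.replicate_succ']
  rcases Nat.eq_or_lt_of_le h1 with h2 | h2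
  · rw [take_v0 (by omega), take_v0 (by omega), if_neg (by omega), if_pos (by omega),
      decide_eq_true h2.symm, (by omega : l + 1 - m - 1 = 0), ← h2]
    simp
  · rw [take_v0 (by omega), take_v0 (by omega), if_neg (by omega), if_neg (by omega),
      decide_eq_false (by omega : ¬ (l = m)), (by omega : l + 1 - m - 1 = (l - m - 1) + 1),
      List.replicate_succ', List.append_assoc]
    simp

lemma lemPos (hm : 2 ≤ m) : ∀ j, j ≤ 2*m →
    3 ≤ (preimA m 1 (VC m (2*m - j)) ((v0 m).take (j+1))).card := by
  intro j
  induction j with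
  | zero =>
    intro _
    have h1 : (v0 m).take 1 = [false] := by
      rw [take_v0 (by omega), if_pos (by omega)]
      rfl
    rw [h1, preim_single, Nat.sub_zero]
    exact lemWin hm
  | succ j ih =>
    intro hj
    have hr : 2*m - (j+1) < 2*m := by omega
    have hx : (decide (j+1 = m)) = (decide (2*m - (j+1) = m)) := by
      rcases Nat.decEq (j+1) m with h | h
      · rw [decide_eq_false h, decide_eq_false (by omega)]
      · rw [decide_eq_true h, decide_eq_true (by omega)]
    rw [take_succ_v0 (by omega), hx, preim_append, lemC hm hr,
      (by omega : 2*m - (j+1) + 1 = 2*m - j)]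
    exact ih (by omega)

lemma lemM (hm : 2 ≤ m) (v : List Bool) : ∀ r, r ≤ 2*m →
    3 ≤ (preimA m 1 (VC m r) v).card →
    2*m+1-r ≤ v.length ∧ (v.length = 2*m+1-r → v = (v0 m).take (2*m+1-r)) := by
  induction v using List.reverseRecOn with
  | nil =>
    intro r hr h
    rw [preim_nil] at h
    have := lemL1 hm hr
    rw [L_card3 h] at this
    omega
  | append_singleton w x ih =>
    intro r hr h
    rw [preim_append] at h
    have hLB := lemLB hm w (pre x (VC m r)) h
    have hA := lemA hm (VC m r) x
    rw [lemL1 hm hr] at hA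
    simp only [List.length_append, List.length_singleton]
    constructor
    · omega
    · intro hlen
      have hL' : L m (pre x (VC m r)) = 2*m - r := by omega
      have hxr := lemForce hm hr hL'
      rcases Nat.eq_or_lt_of_le hr with h2m | h2m
      · -- r = 2m : w must be empty
        have hw : w = [] := by
          apply List.length_eq_zero_iff.mp
          omega
        subst hw
        have hxf : x = false := by rw [hxr, decide_eq_false (by omega)]
        subst hxf
        rw [(by omega : 2*m+1-r = 1), take_v0 (by omega), if_pos (by omega)]
        rfl
      · -- r < 2m
        rw [hxr, lemC hm h2m] at h
        have hIH := ih (r+1) (by omega) h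
        have hwl : w.length = 2*m+1-(r+1) := by omega
        have hw := hIH.2 hwl
        rw [hw, hxr]
        have hx2 : (decide (r = m)) = (decide (2*m+1-(r+1) = m)) := by
          rcases Nat.decEq r m with hh | hh
          · rw [decide_eq_false hh, decide_eq_false (by omega)]
          · rw [decide_eq_true hh, decide_eq_true (by omega)]
        rw [hx2, ← take_succ_v0 (by omega), (by omega : 2*m+1-(r+1)+1 = 2*m+1-r)]

end Ext7

theorem stmt7 (n : ℕ) (hn : 3 < n) :
    let S : Finset (QA (n - 2) 1) := {Sum.inl 0, Sum.inr 0}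
    let v₀ : List Bool :=
      List.replicate (n - 2) false ++ [true] ++ List.replicate (n - 2) false
    -- v₀ extends S,
    (S.card < (preimA (n - 2) 1 S v₀).card) ∧
    v₀.length = 2 * n - 3 ∧
    -- v₀ is the unique shortest extension word for S,
    (∀ v : List Bool, S.card < (preimA (n - 2) 1 S v).card →
      v₀.length ≤ v.length ∧ (v.length = v₀.length → v = v₀)) ∧
    -- hence S is not cn-Extendable for any c < 2 once n > 3/(2-c).
    (∀ c : ℝ, c < 2 → (3 : ℝ) / (2 - c) < (n : ℝ) →
      ¬ ∃ v : List Bool, (v.length : ℝ) ≤ c * (n : ℝ) ∧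
        S.card < (preimA (n - 2) 1 S v).card) := by
  intro S v₀
  have hm : 2 ≤ n - 2 := by omega
  have hSV : S = Ext7.VC (n-2) 0 := by rw [Ext7.VC, if_pos rfl]
  have hv0 : v₀ = Ext7.v0 (n-2) := by
    show (List.replicate (n-2) false ++ [true]) ++ List.replicate (n-2) false = _
    rw [Ext7.v0, List.append_assoc]
    rfl
  have hlen : v₀.length = 2*(n-2)+1 := by rw [hv0, Ext7.length_v0]
  have hScard : S.card = 2 := by
    show (insert (Sum.inl 0) ({Sum.inr 0} : Finset (QA (n-2) 1))).card = 2
    rw [Finset.card_insert_of_notMem (by simp)]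
    rfl
  have hfull : Ext7.v0 (n-2) = (Ext7.v0 (n-2)).take (2*(n-2)+1) := by
    rw [← Ext7.length_v0, List.take_length]
  have hlow : ∀ v : List Bool, S.card < (preimA (n - 2) 1 S v).card →
      v₀.length ≤ v.length ∧ (v.length = v₀.length → v = v₀) := by
    intro v hv
    rw [hScard] at hv
    have h3 : 3 ≤ (preimA (n-2) 1 (Ext7.VC (n-2) 0) v).card := by
      rw [← hSV]; omega
    have hM := Ext7.lemM hm v 0 (by omega) h3
    rw [Nat.sub_zero] at hM
    constructor
    · omega
    · intro heq
      have := hM.2 (by omega)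
      rw [this, ← hfull, ← hv0]
  refine ⟨?_, ?_, hlow, ?_⟩
  · -- v₀ extends S
    have hpos := Ext7.lemPos hm (2*(n-2)) le_rfl
    rw [Nat.sub_self] at hpos
    rw [hScard, hSV, hv0, hfull]
    omega
  · rw [hlen]; omega
  · -- no c·n extension for c < 2
    rintro c hc hcn ⟨v, hv1, hv2⟩
    have h1 := (hlow v hv2).1
    rw [hlen] at h1
    have h2 : ((2*(n-2)+1 : ℕ) : ℝ) = 2*(n:ℝ) - 3 := by
      have e : (2*(n-2)+1 : ℕ) = 2*n - 3 := by omega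
      rw [e, Nat.cast_sub (by omega)]
      push_cast
      ring
    have h3 : ((2*(n-2)+1 : ℕ) : ℝ) ≤ (v.length : ℝ) := Nat.cast_le.mpr h1
    have h4 : (3:ℝ) < (n:ℝ) * (2 - c) := by
      rw [div_lt_iff₀ (by linarith)] at hcn
      exact hcn
    nlinarith [h2, h3, hv1, h4]
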